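/- For n ≥ 2 and 1 ≤ a ≤ n, the Hall inner product ⟨h_n[h_1·h_1], s_{(2n-a,a)}⟩ equals a/2 + 1 if a is even and (a+1)/2 if a is odd. -/

import Mathlib

open MvPolynomial

/-- The ring of symmetric functions, modeled as the polynomial ring
`ℚ[h₁, h₂, …]` in the complete homogeneous symmetric functions (variable `i`
corresponds to `h_{i+1}`). -/
abbrev SymF : Type := MvPolynomial ℕ ℚ

/-- The complete homogeneous symmetric function `h_n` as an element of `SymF`. -/
noncomputable def hh : ℕ → SymF
  | 0 => 1
  | n + 1 => X n

/-- The expression of `h_n` in terms of the power sums (in the polynomial ring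
`ℚ[p₁, p₂, …]`, variable `i` corresponding to `p_{i+1}`), via Newton's identity
`n·h_n = ∑_{i=1}^n p_i h_{n-i}`. -/
noncomputable def hInP : ℕ → MvPolynomial ℕ ℚ
  | 0 => 1
  | n + 1 =>
      ((n + 1 : ℚ))⁻¹ • ∑ i ∈ Finset.range (n + 1), X i * hInP (n - i)
  termination_by n => n
  decreasing_by omega

/-- The power sum symmetric function `p_n` as an element of `SymF`, via Newton's
identity `p_n = n·h_n - ∑_{i=1}^{n-1} p_i h_{n-i}`. -/
noncomputable def pSym : ℕ → SymF
  | 0 => 1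
  | n + 1 =>
      ((n : ℚ) + 1) • hh (n + 1) -
        ∑ i ∈ (Finset.range n).attach, pSym (i.1 + 1) * hh (n - i.1)
  termination_by n => n
  decreasing_by
    have h := Finset.mem_range.mp i.2
    omega

/-- The isomorphism expressing a symmetric function in the power sum basis. -/
noncomputable def toP : SymF →ₐ[ℚ] MvPolynomial ℕ ℚ :=
  aeval (fun i => hInP (i + 1))

/-- `psub k g = p_k[g]`, plethysm of a power sum with `g`: substitute `p_i ↦ p_{ik}`
in the power-sum expression of `g`. -/
noncomputable def psub (k : ℕ) (g : SymF) : SymF :=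
  aeval (fun i => pSym ((i + 1) * k)) (toP g)

/-- Plethysm `f[g]` of symmetric functions: substitute `p_k ↦ p_k[g]` in the
power-sum expression of `f`. -/
noncomputable def pleth (f g : SymF) : SymF :=
  aeval (fun i => psub (i + 1) g) (toP f)

/-- `h_z` for integer index: zero for negative `z`. -/
noncomputable def hZ (z : ℤ) : SymF := if 0 ≤ z then hh z.toNat else 0

/-- The Schur function of a partition given as a weakly decreasing list of parts,
defined by the Jacobi–Trudi determinant `s_λ = det(h_{λ_i - i + j})`. -/
noncomputable def schur (l : List ℕ) : SymF :=
  (Matrix.of fun i j : Fin l.length =>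
    hZ ((l.get i : ℤ) + (j : ℤ) - (i : ℤ))).det

/-- `z_λ` for the monomial `d` in the power sums: `∏_i i^{m_i} m_i!`. -/
def zQ (d : ℕ →₀ ℕ) : ℚ :=
  d.prod fun i m => ((i : ℚ) + 1) ^ m * (Nat.factorial m : ℚ)

/-- The Hall inner product, characterized by `⟨p_λ, p_μ⟩ = δ_{λμ} z_λ`, computed in
the power sum basis. -/
noncomputable def hall (f g : SymF) : ℚ :=
  ∑ d ∈ (toP f).support, zQ d * (toP f).coeff d * (toP g).coeff d

/-- The decreasingly sorted list of parts of a partition. -/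
def sortedParts {N : ℕ} (π : Nat.Partition N) : List ℕ :=
  (π.parts.sort (· ≤ ·)).reverse
namespace HallAux

open Finset

/-- weight of a power-sum monomial -/
def wt (d : ℕ →₀ ℕ) : ℕ := d.sum fun i m => (i + 1) * m

lemma wt_zero : wt 0 = 0 := Finsupp.sum_zero_index

lemma wt_single (a m : ℕ) : wt (Finsupp.single a m) = (a + 1) * m :=
  Finsupp.sum_single_index (by simp)

lemma wt_add (d e : ℕ →₀ ℕ) : wt (d + e) = wt d + wt e :=
  Finsupp.sum_add_index' (by simp) (fun i m1 m2 => by ring)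

lemma wt_eq_zero_iff {d : ℕ →₀ ℕ} : wt d = 0 ↔ d = 0 := by
  constructor
  · intro h
    by_contra hd
    obtain ⟨a, ha⟩ : ∃ a, d a ≠ 0 := by
      by_contra h'
      push_neg at h'
      exact hd (Finsupp.ext fun a => h' a)
    have h1 : (a + 1) * d a ≤ wt d :=
      Finset.single_le_sum (f := fun i => (i + 1) * d i)
        (fun i _ => Nat.zero_le _) (Finsupp.mem_support_iff.mpr ha)
    have : 0 < (a + 1) * d a := Nat.mul_pos (Nat.succ_pos a) (Nat.pos_of_ne_zero ha)
    omega
  · rintro rfl; exact wt_zero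

lemma le_of_mem_support_wt {d : ℕ →₀ ℕ} {i : ℕ} (h : i ∈ d.support) :
    i + 1 ≤ wt d := by
  have h1 : (i + 1) * d i ≤ wt d :=
    Finset.single_le_sum (f := fun j => (j + 1) * d j)
      (fun j _ => Nat.zero_le _) h
  have h2 : d i ≠ 0 := Finsupp.mem_support_iff.mp h
  nlinarith [Nat.one_le_iff_ne_zero.mpr h2]

lemma wt_cast (d : ℕ →₀ ℕ) :
    (wt d : ℚ) = ∑ i ∈ d.support, ((i : ℚ) + 1) * (d i : ℚ) := by
  unfold wt Finsupp.sum
  push_cast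
  rfl

lemma zQ_pos (d : ℕ →₀ ℕ) : 0 < zQ d := by
  unfold zQ
  refine Finset.prod_pos fun i _ => ?_
  have : (0:ℚ) < (Nat.factorial (d i) : ℚ) := by positivity
  positivity

lemma zQ_ne_zero (d : ℕ →₀ ℕ) : zQ d ≠ 0 := ne_of_gt (zQ_pos d)

lemma zQ_zero : zQ 0 = 1 := Finsupp.prod_zero_index

lemma zQ_add_single (u : ℕ →₀ ℕ) (i : ℕ) :
    zQ (u + Finsupp.single i 1) = zQ u * (((i : ℚ) + 1) * ((u i : ℚ) + 1)) := by
  classical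
  set g : ℕ → ℕ → ℚ := fun i m => ((i : ℚ) + 1) ^ m * (Nat.factorial m : ℚ) with hg
  have hg1 : ∀ j, g j 0 = 1 := by intro j; simp [hg]
  set d := u + Finsupp.single i 1 with hd
  set s : Finset ℕ := insert i u.support with hs
  have hds : d.support ⊆ s := by
    intro j hj
    rcases Finset.mem_union.mp (Finsupp.support_add hj) with h | h
    · exact Finset.mem_insert_of_mem h
    · have := Finsupp.support_single_subset h
      simp only [Finset.mem_singleton] at this
      simp [hs, this]
  have hus : u.support ⊆ s := Finset.subset_insert _ _
  have hzd : zQ d = ∏ j ∈ s, g j (d j) :=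
    Finsupp.prod_of_support_subset d hds g (fun j _ => hg1 j)
  have hzu : zQ u = ∏ j ∈ s, g j (u j) :=
    Finsupp.prod_of_support_subset u hus g (fun j _ => hg1 j)
  have his : i ∈ s := Finset.mem_insert_self _ _
  have hprod_eq : ∏ j ∈ s.erase i, g j (d j) = ∏ j ∈ s.erase i, g j (u j) := by
    refine Finset.prod_congr rfl fun j hj => ?_
    have hji : j ≠ i := Finset.ne_of_mem_erase hj
    have h0 : (Finsupp.single i 1) j = 0 := Finsupp.single_eq_of_ne' (Ne.symm hji)
    have : d j = u j := by simp [hd, h0]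
    rw [this]
  have hdi : d i = u i + 1 := by simp [hd]
  have hgi : g i (u i + 1) = g i (u i) * (((i : ℚ) + 1) * ((u i : ℚ) + 1)) := by
    simp only [hg, pow_succ, Nat.factorial_succ]
    push_cast
    ring
  calc zQ d = ∏ j ∈ s, g j (d j) := hzd
    _ = g i (d i) * ∏ j ∈ s.erase i, g j (d j) :=
        (Finset.mul_prod_erase s _ his).symm
    _ = g i (u i) * (((i : ℚ) + 1) * ((u i : ℚ) + 1)) * ∏ j ∈ s.erase i, g j (u j) := by
        rw [hdi, hgi, hprod_eq]
    _ = (g i (u i) * ∏ j ∈ s.erase i, g j (u j)) * (((i : ℚ) + 1) * ((u i : ℚ) + 1)) := by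
        ring
    _ = (∏ j ∈ s, g j (u j)) * (((i : ℚ) + 1) * ((u i : ℚ) + 1)) := by
        rw [← Finset.mul_prod_erase s (fun j => g j (u j)) his]
    _ = zQ u * (((i : ℚ) + 1) * ((u i : ℚ) + 1)) := by rw [hzu]

end HallAux
namespace HallAux

lemma support_subset_range {d : ℕ →₀ ℕ} {n : ℕ} (h : wt d = n) :
    d.support ⊆ Finset.range n := by
  intro i hi
  have := le_of_mem_support_wt hi
  rw [h] at this
  exact Finset.mem_range.mpr (by omega)

lemma coeff_hInP (n : ℕ) : ∀ (d : ℕ →₀ ℕ),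
    (hInP n).coeff d = if wt d = n then (zQ d)⁻¹ else 0 := by
  induction n using Nat.strong_induction_on with
  | _ n IH =>
    cases n with
    | zero =>
      intro d
      rw [hInP, MvPolynomial.coeff_one]
      by_cases hd : d = 0
      · subst hd; simp [wt_zero, zQ_zero]
      · rw [if_neg (fun h => hd h.symm), if_neg (fun h => hd (wt_eq_zero_iff.mp h))]
    | succ m =>
      intro d
      rw [hInP, MvPolynomial.coeff_smul, MvPolynomial.coeff_sum]
      have hterm : ∀ i ∈ Finset.range (m+1),
          MvPolynomial.coeff d (MvPolynomial.X i * hInP (m - i)) =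
          if i ∈ d.support then
            (if wt (d - Finsupp.single i 1) = m - i then (zQ (d - Finsupp.single i 1))⁻¹ else 0)
          else 0 := by
        intro i _
        rw [MvPolynomial.coeff_X_mul', IH (m - i) (by omega)]
      rw [Finset.sum_congr rfl hterm]
      by_cases hwt : wt d = m + 1
      · rw [if_pos hwt]
        have hsup : d.support ⊆ Finset.range (m+1) := support_subset_range hwt
        have hterm2 : ∀ i ∈ Finset.range (m+1),
            (if i ∈ d.support then
              (if wt (d - Finsupp.single i 1) = m - i then (zQ (d - Finsupp.single i 1))⁻¹ else 0)
            else 0)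
            = (if i ∈ d.support then ((i:ℚ)+1) * (d i : ℚ) * (zQ d)⁻¹ else 0) := by
          intro i _
          by_cases hid : i ∈ d.support
          · rw [if_pos hid, if_pos hid]
            have hdi : d i ≠ 0 := Finsupp.mem_support_iff.mp hid
            have hle : Finsupp.single i 1 ≤ d := Finsupp.single_le_iff.mpr (by omega)
            set u := d - Finsupp.single i 1 with hu
            have hdu : u + Finsupp.single i 1 = d := tsub_add_cancel_of_le hle
            have him : i < m + 1 := Finset.mem_range.mp (hsup hid)
            have hwtu : wt u + (i + 1) = m + 1 := by
              have h1 := wt_add u (Finsupp.single i 1)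
              rw [hdu, wt_single] at h1
              omega
            rw [if_pos (by omega : wt u = m - i)]
            have hui : u i + 1 = d i := by
              have h2 := DFunLike.congr_fun hdu i
              simpa using h2
            have hz := zQ_add_single u i
            rw [hdu] at hz
            rw [hz, ← hui]
            have h3 : zQ u ≠ 0 := zQ_ne_zero u
            have h4 : ((i:ℚ) + 1) ≠ 0 := by positivity
            have h5 : ((u i : ℚ) + 1) ≠ 0 := by positivity
            push_cast
            field_simp
          · rw [if_neg hid, if_neg hid]
        rw [Finset.sum_congr rfl hterm2, Finset.sum_ite_mem,
          Finset.inter_eq_right.mpr hsup, ← Finset.sum_mul]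
        have h6 : ∑ i ∈ d.support, ((i:ℚ)+1) * (d i : ℚ) = ((m:ℚ) + 1) := by
          rw [← wt_cast, hwt]; push_cast; ring
        rw [h6, smul_eq_mul]
        have h7 : ((m:ℚ) + 1) ≠ 0 := by positivity
        field_simp
      · rw [if_neg hwt]
        have hzero : ∑ i ∈ Finset.range (m+1),
            (if i ∈ d.support then
              (if wt (d - Finsupp.single i 1) = m - i then (zQ (d - Finsupp.single i 1))⁻¹ else 0)
            else 0) = 0 := by
          refine Finset.sum_eq_zero fun i hi => ?_
          by_cases hid : i ∈ d.support
          · rw [if_pos hid, if_neg]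
            intro hwtu
            apply hwt
            have hdi : d i ≠ 0 := Finsupp.mem_support_iff.mp hid
            have hle : Finsupp.single i 1 ≤ d := Finsupp.single_le_iff.mpr (by omega)
            have hdu : d - Finsupp.single i 1 + Finsupp.single i 1 = d :=
              tsub_add_cancel_of_le hle
            have h1 := wt_add (d - Finsupp.single i 1) (Finsupp.single i 1)
            rw [hdu, wt_single, hwtu] at h1
            have him : i < m + 1 := Finset.mem_range.mp hi
            omega
          · rw [if_neg hid]
        rw [hzero, smul_zero]

lemma mem_support_hInP {n : ℕ} {d : ℕ →₀ ℕ} :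
    d ∈ (hInP n).support ↔ wt d = n := by
  rw [MvPolynomial.mem_support_iff, coeff_hInP]
  split_ifs with h
  · simpa [h] using inv_ne_zero (zQ_ne_zero d)
  · simp [h]

end HallAux
namespace HallAux

lemma toP_hh (k : ℕ) : toP (hh k) = hInP k := by
  cases k with
  | zero =>
    rw [show hh 0 = 1 from rfl, map_one, hInP]
  | succ m => simp [hh, toP, MvPolynomial.aeval_X]

lemma hInP_one : hInP 1 = MvPolynomial.X 0 := by
  rw [hInP]
  simp [hInP]

lemma toP_pSym (m : ℕ) : toP (pSym (m + 1)) = MvPolynomial.X m := by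
  induction m using Nat.strong_induction_on with
  | _ n IH =>
    rw [pSym]
    rw [map_sub, map_smul, toP_hh, map_sum]
    have hterm : ∀ i ∈ (Finset.range n).attach,
        toP (pSym (i.1 + 1) * hh (n - i.1)) = MvPolynomial.X i.1 * hInP (n - i.1) := by
      intro i _
      have hi : i.1 < n := Finset.mem_range.mp i.2
      rw [map_mul, toP_hh, IH i.1 hi]
    rw [Finset.sum_congr rfl hterm]
    rw [Finset.sum_attach (Finset.range n) (fun i => MvPolynomial.X i * hInP (n - i))]
    have hrec : ((n : ℚ) + 1) • hInP (n + 1) =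
        ∑ i ∈ Finset.range (n + 1), MvPolynomial.X i * hInP (n - i) := by
      rw [hInP, smul_smul]
      rw [mul_inv_cancel₀ (by positivity : ((n : ℚ) + 1) ≠ 0), one_smul]
    have : ((n:ℚ) + 1) = ((n:ℚ) + 1) := rfl
    rw [show ((n:ℚ) + 1) • hInP (n + 1) = _ from hrec]
    rw [Finset.sum_range_succ]
    have h0 : hInP (n - n) = 1 := by
      rw [Nat.sub_self]; rw [hInP]
    rw [h0, mul_one]
    ring

/-- the first pairing argument in power-sum coordinates -/
lemma toP_pleth_A (n : ℕ) :
    toP (pleth (hh n) (hh 1 * hh 1)) =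
      MvPolynomial.aeval (fun i => MvPolynomial.X i * MvPolynomial.X i) (hInP n) := by
  have hg : toP (hh 1 * hh 1) = MvPolynomial.X 0 * MvPolynomial.X 0 := by
    rw [map_mul, toP_hh, hInP_one]
  have hpsub : ∀ k : ℕ, toP (psub (k + 1) (hh 1 * hh 1)) =
      MvPolynomial.X k * MvPolynomial.X k := by
    intro k
    rw [psub, hg]
    simp only [map_mul, MvPolynomial.aeval_X]
    norm_num [toP_pSym]
  rw [pleth, toP_hh]
  have hcomp := MvPolynomial.comp_aeval (R := ℚ)
    (fun i => psub (i + 1) (hh 1 * hh 1)) toP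
  have := AlgHom.congr_fun hcomp (hInP n)
  simp only [AlgHom.coe_comp, Function.comp_apply] at this
  rw [this]
  have hfun : (fun i => toP (psub (i + 1) (hh 1 * hh 1))) =
      (fun i => MvPolynomial.X i * MvPolynomial.X i : ℕ → MvPolynomial ℕ ℚ) :=
    funext hpsub
  rw [hfun]

/-- the Schur function of a two-row partition via Jacobi-Trudi -/
lemma toP_schur_two (b a : ℕ) (hab : a ≤ b + 1) (ha : 1 ≤ a) :
    toP (schur [b, a]) = hInP b * hInP a - hInP (b + 1) * hInP (a - 1) := by
  rw [schur]
  rw [show (Matrix.of fun i j : Fin ([b, a].length) =>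
      hZ ((([b, a].get i : ℕ) : ℤ) + (j : ℤ) - (i : ℤ))).det =
    (Matrix.of fun i j : Fin 2 =>
      hZ ((([b, a].get i : ℕ) : ℤ) + (j : ℤ) - (i : ℤ))).det from rfl]
  rw [Matrix.det_fin_two]
  simp only [Matrix.of_apply]
  norm_num
  have h1 : hZ (b:ℤ) = hh b := by simp [hZ]
  have h1' : hZ (a:ℤ) = hh a := by simp [hZ]
  have h2 : hZ ((b:ℤ)+1) = hh (b+1) := by
    rw [hZ, if_pos (by omega : (0:ℤ) ≤ (b:ℤ)+1), show ((b:ℤ)+1).toNat = b + 1 by omega]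
  have h3 : hZ ((a:ℤ)-1) = hh (a-1) := by
    rw [hZ, if_pos (by omega : (0:ℤ) ≤ (a:ℤ)-1), show ((a:ℤ)-1).toNat = a - 1 by omega]
  rw [h1, h1', h2, h3]
  rw [toP_hh, toP_hh, toP_hh, toP_hh]

end HallAux
namespace HallAux

open Finset MvPolynomial

/-- exponent finsupp for the two-variable monomial x^c y^d -/
noncomputable def E2 (c d : ℕ) : Fin 2 →₀ ℕ := Finsupp.single 0 c + Finsupp.single 1 d

lemma E2_apply0 (c d : ℕ) : E2 c d 0 = c := by
  simp [E2, Finsupp.single_apply]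

lemma E2_apply1 (c d : ℕ) : E2 c d 1 = d := by
  simp [E2, Finsupp.single_apply]

lemma E2_eq_iff {c d c' d' : ℕ} : E2 c d = E2 c' d' ↔ c = c' ∧ d = d' := by
  constructor
  · intro h
    have h0 := DFunLike.congr_fun h 0
    have h1 := DFunLike.congr_fun h 1
    rw [E2_apply0, E2_apply0] at h0
    rw [E2_apply1, E2_apply1] at h1
    exact ⟨h0, h1⟩
  · rintro ⟨rfl, rfl⟩; rfl

lemma E2_add (c d c' d' : ℕ) : E2 c d + E2 c' d' = E2 (c + c') (d + d') := by
  simp only [E2, Finsupp.single_add]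
  abel

/-- product of binomial coefficients -/
def binomQ (d u : ℕ →₀ ℕ) : ℕ := ∏ i ∈ d.support, (d i).choose (u i)

lemma binomQ_zero : binomQ 0 0 = 1 := by simp [binomQ]

lemma support_le_left {u v d : ℕ →₀ ℕ} (h : u + v = d) : u.support ⊆ d.support := by
  intro i hi
  rw [Finsupp.mem_support_iff] at hi ⊢
  have := DFunLike.congr_fun h i
  simp only [Finsupp.add_apply] at this
  omega

lemma zQ_mul (u v : ℕ →₀ ℕ) :
    zQ (u + v) = (binomQ (u + v) u : ℚ) * zQ u * zQ v := by
  classical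
  set g : ℕ → ℕ → ℚ := fun i m => ((i : ℚ) + 1) ^ m * (Nat.factorial m : ℚ) with hgdef
  have hg1 : ∀ j, g j 0 = 1 := by intro j; simp [hgdef]
  set d := u + v with hd
  have hus : u.support ⊆ d.support := support_le_left hd.symm
  have hvs : v.support ⊆ d.support := by
    rw [add_comm] at hd
    exact support_le_left hd.symm
  have hzu : zQ u = ∏ j ∈ d.support, g j (u j) :=
    Finsupp.prod_of_support_subset u hus g (fun j _ => hg1 j)
  have hzv : zQ v = ∏ j ∈ d.support, g j (v j) :=
    Finsupp.prod_of_support_subset v hvs g (fun j _ => hg1 j)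
  have hzd : zQ d = ∏ j ∈ d.support, g j (d j) := rfl
  rw [hzd, hzu, hzv, binomQ, Nat.cast_prod, ← Finset.prod_mul_distrib,
    ← Finset.prod_mul_distrib]
  refine Finset.prod_congr rfl fun i _ => ?_
  have hdi : d i = u i + v i := by simp [hd]
  rw [hdi]
  simp only [hgdef]
  have hch := Nat.add_choose_mul_factorial_mul_factorial (u i) (v i)
  have : ((u i + v i).choose (v i) * Nat.factorial (u i) * Nat.factorial (v i) : ℚ)
      = (Nat.factorial (u i + v i) : ℚ) := by exact_mod_cast congrArg Nat.cast hch
  have hc2 : (u i + v i).choose (u i) = (u i + v i).choose (v i) := by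
    rw [← Nat.choose_symm (Nat.le_add_right (u i) (v i)), Nat.add_sub_cancel_left]
  rw [pow_add, hc2, ← this]
  ring

lemma sum_antidiagonal_single_add {M : Type*} [AddCommMonoid M] (a m : ℕ) (d : ℕ →₀ ℕ)
    (hd : a ∉ d.support) (f : (ℕ →₀ ℕ) → (ℕ →₀ ℕ) → M) :
    ∑ p ∈ Finset.HasAntidiagonal.antidiagonal (Finsupp.single a m + d), f p.1 p.2 =
    ∑ q ∈ (Finset.range (m + 1)) ×ˢ Finset.HasAntidiagonal.antidiagonal d,
      f (Finsupp.single a q.1 + q.2.1) (Finsupp.single a (m - q.1) + q.2.2) := by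
  classical
  have hda : d a = 0 := Finsupp.notMem_support_iff.mp hd
  refine (Finset.sum_bij'
    (i := fun (p : (ℕ →₀ ℕ) × (ℕ →₀ ℕ)) _ => (p.1 a, (p.1.erase a, p.2.erase a)))
    (j := fun (q : ℕ × ((ℕ →₀ ℕ) × (ℕ →₀ ℕ))) _ =>
      (Finsupp.single a q.1 + q.2.1, Finsupp.single a (m - q.1) + q.2.2))
    ?_ ?_ ?_ ?_ ?_)
  · -- i maps into target
    rintro ⟨x, y⟩ hp
    rw [Finset.HasAntidiagonal.mem_antidiagonal] at hp
    have happ := DFunLike.congr_fun hp a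
    simp only [Finsupp.add_apply, Finsupp.single_eq_same] at happ
    rw [hda] at happ
    simp only [Finset.mem_product, Finset.mem_range, Finset.HasAntidiagonal.mem_antidiagonal]
    constructor
    · omega
    · have : (x + y).erase a = x.erase a + y.erase a := Finsupp.erase_add a x y
      rw [← this, hp, Finsupp.erase_add, Finsupp.erase_single,
        Finsupp.erase_of_notMem_support hd, zero_add]
  · -- j maps into source
    rintro ⟨p, u, v⟩ hq
    simp only [Finset.mem_product, Finset.mem_range, Finset.HasAntidiagonal.mem_antidiagonal] at hq
    rw [Finset.HasAntidiagonal.mem_antidiagonal]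
    obtain ⟨hp, huv⟩ := hq
    have : Finsupp.single a p + Finsupp.single a (m - p) = Finsupp.single a m := by
      rw [← Finsupp.single_add]
      congr 1
      omega
    calc Finsupp.single a p + u + (Finsupp.single a (m - p) + v)
        = (Finsupp.single a p + Finsupp.single a (m - p)) + (u + v) := by abel
      _ = Finsupp.single a m + d := by rw [this, huv]
  · -- left inverse
    rintro ⟨x, y⟩ hp
    rw [Finset.HasAntidiagonal.mem_antidiagonal] at hp
    simp only
    rw [Finsupp.single_add_erase]
    have happ := DFunLike.congr_fun hp a
    simp only [Finsupp.add_apply, Finsupp.single_eq_same] at happ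
    rw [hda] at happ
    have hya : y a = m - x a := by omega
    rw [← hya, Finsupp.single_add_erase]
  · -- right inverse
    rintro ⟨p, u, v⟩ hq
    simp only [Finset.mem_product, Finset.mem_range, Finset.HasAntidiagonal.mem_antidiagonal] at hq
    obtain ⟨hp, huv⟩ := hq
    have hu : u a = 0 := by
      have := support_le_left huv
      by_contra h
      exact hd (this (Finsupp.mem_support_iff.mpr h))
    have hv : v a = 0 := by
      rw [add_comm] at huv
      have := support_le_left huv
      by_contra h
      exact hd (this (Finsupp.mem_support_iff.mpr h))
    simp only
    have h1 : (Finsupp.single a p + u) a = p := by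
      simp [Finsupp.add_apply, hu]
    have h2 : (Finsupp.single a p + u).erase a = u := by
      rw [Finsupp.erase_add, Finsupp.erase_single, zero_add,
        Finsupp.erase_of_notMem_support (Finsupp.notMem_support_iff.mpr hu)]
    have h3 : (Finsupp.single a (m - p) + v).erase a = v := by
      rw [Finsupp.erase_add, Finsupp.erase_single, zero_add,
        Finsupp.erase_of_notMem_support (Finsupp.notMem_support_iff.mpr hv)]
    rw [h1, h2, h3]
  · -- values agree
    rintro ⟨x, y⟩ hp
    rw [Finset.HasAntidiagonal.mem_antidiagonal] at hp
    have happ := DFunLike.congr_fun hp a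
    simp only [Finsupp.add_apply, Finsupp.single_eq_same] at happ
    rw [hda] at happ
    have hx : Finsupp.single a (x a) + x.erase a = x := Finsupp.single_add_erase a x
    have hy : Finsupp.single a (m - x a) + y.erase a = y := by
      have hya : y a = m - x a := by omega
      rw [← hya]
      exact Finsupp.single_add_erase a y
    simp only
    rw [hx, hy]

end HallAux
namespace HallAux

open Finset MvPolynomial

noncomputable def Phi : MvPolynomial ℕ ℚ →ₐ[ℚ] MvPolynomial (Fin 2) ℚ :=
  aeval (fun i => X 0 ^ (i + 1) + X 1 ^ (i + 1))

lemma binomQ_single_add {a m : ℕ} (hm : m ≠ 0) {d u : ℕ →₀ ℕ} (ha : a ∉ d.support)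
    (hu : u.support ⊆ d.support) (p : ℕ) :
    binomQ (Finsupp.single a m + d) (Finsupp.single a p + u) =
      m.choose p * binomQ d u := by
  classical
  have hua : u a = 0 := Finsupp.notMem_support_iff.mp (fun h => ha (hu h))
  have hda : d a = 0 := Finsupp.notMem_support_iff.mp ha
  have hsupp : (Finsupp.single a m + d).support = insert a d.support := by
    rw [Finsupp.support_add_eq, Finsupp.support_single_ne_zero a hm]
    · rw [← Finset.insert_eq]
    · rw [Finsupp.support_single_ne_zero a hm]
      simp only [Finset.disjoint_singleton_left]
      exact ha
  rw [binomQ, hsupp, Finset.prod_insert ha]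
  congr 1
  · have h1 : (Finsupp.single a m + d) a = m := by simp [hda]
    have h2 : (Finsupp.single a p + u) a = p := by simp [hua]
    rw [h1, h2]
  · rw [binomQ]
    refine Finset.prod_congr rfl fun j hj => ?_
    have hja : j ≠ a := fun h => ha (h ▸ hj)
    have h1 : (Finsupp.single a m + d) j = d j := by
      simp [Finsupp.single_apply, Ne.symm hja]
    have h2 : (Finsupp.single a p + u) j = u j := by
      simp [Finsupp.single_apply, Ne.symm hja]
    rw [h1, h2]

lemma Phi_monomial (d : ℕ →₀ ℕ) :
    Phi (monomial d 1) =
    ∑ p ∈ Finset.HasAntidiagonal.antidiagonal d,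
      monomial (E2 (wt p.1) (wt p.2)) ((binomQ d p.1 : ℚ)) := by
  classical
  induction d using Finsupp.induction with
  | zero =>
    rw [Finsupp.antidiagonal_zero, Finset.sum_singleton]
    rw [show (monomial (0 : ℕ →₀ ℕ)) (1:ℚ) = 1 from by simp, map_one]
    rw [binomQ_zero, wt_zero]
    rw [show E2 0 0 = 0 from by simp [E2]]
    simp
  | single_add a m d ham hm IH =>
    have hXsplit : (monomial (Finsupp.single a m + d)) (1:ℚ) =
        monomial (Finsupp.single a m) 1 * monomial d 1 := by
      rw [monomial_mul, one_mul]
    rw [hXsplit, map_mul]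
    have hPhiSingle : Phi (monomial (Finsupp.single a m) 1) =
        ∑ p ∈ Finset.range (m + 1),
          monomial (E2 ((a+1) * p) ((a+1) * (m - p))) ((m.choose p : ℚ)) := by
      rw [Phi, aeval_monomial]
      rw [Finsupp.prod_single_index (by simp)]
      rw [add_pow]
      rw [map_one, one_mul]
      refine Finset.sum_congr rfl fun p _ => ?_
      rw [← pow_mul, ← pow_mul]
      rw [X_pow_eq_monomial, X_pow_eq_monomial, monomial_mul, one_mul]
      rw [show ((m.choose p : ℕ) : MvPolynomial (Fin 2) ℚ) = C ((m.choose p : ℕ) : ℚ) from by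
        push_cast
        simp]
      rw [mul_comm, C_mul_monomial]
      norm_num [E2]
    rw [hPhiSingle, IH, Finset.sum_mul_sum]
    rw [sum_antidiagonal_single_add a m d ham
      (fun u v => monomial (E2 (wt u) (wt v)) ((binomQ (Finsupp.single a m + d) u : ℚ)))]
    rw [Finset.sum_product]
    refine Finset.sum_congr rfl fun p hp => ?_
    refine Finset.sum_congr rfl fun q hq => ?_
    rw [Finset.mem_range] at hp
    rw [Finset.HasAntidiagonal.mem_antidiagonal] at hq
    rw [monomial_mul, E2_add]
    rw [show wt (Finsupp.single a p + q.1) = (a + 1) * p + wt q.1 from by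
      rw [wt_add, wt_single]]
    rw [show wt (Finsupp.single a (m - p) + q.2) = (a + 1) * (m - p) + wt q.2 from by
      rw [wt_add, wt_single]]
    rw [binomQ_single_add hm ham (support_le_left hq) p]
    push_cast
    ring_nf

lemma pairing_monomial (d : ℕ →₀ ℕ) (c c' : ℕ) :
    zQ d * (MvPolynomial.coeff d (hInP c * hInP c')) =
      MvPolynomial.coeff (E2 c c') (Phi (monomial d 1)) := by
  classical
  rw [MvPolynomial.coeff_mul, Phi_monomial, MvPolynomial.coeff_sum, Finset.mul_sum]
  refine Finset.sum_congr rfl fun p hp => ?_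
  rw [Finset.HasAntidiagonal.mem_antidiagonal] at hp
  rw [coeff_hInP, coeff_hInP, coeff_monomial]
  by_cases h1 : wt p.1 = c
  · by_cases h2 : wt p.2 = c'
    · rw [if_pos h1, if_pos h2, if_pos (by rw [h1, h2])]
      have hz := zQ_mul p.1 p.2
      rw [hp] at hz
      rw [hz]
      have := zQ_ne_zero p.1
      have := zQ_ne_zero p.2
      field_simp
      try ring
    · rw [if_neg h2, if_neg (fun h => h2 (E2_eq_iff.mp h).2)]
      ring
  · rw [if_neg h1, if_neg (fun h => h1 (E2_eq_iff.mp h).1)]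
    ring

lemma pairing_sum (A : MvPolynomial ℕ ℚ) (c c' : ℕ) :
    ∑ d ∈ A.support, zQ d * A.coeff d * (MvPolynomial.coeff d (hInP c * hInP c')) =
      MvPolynomial.coeff (E2 c c') (Phi A) := by
  classical
  conv_rhs => rw [← support_sum_monomial_coeff A]
  rw [map_sum, MvPolynomial.coeff_sum]
  refine Finset.sum_congr rfl fun d _ => ?_
  have hmono : (monomial d) (A.coeff d) = C (A.coeff d) * monomial d 1 := by
    rw [C_mul_monomial, mul_one]
  rw [hmono, map_mul, show Phi (C (A.coeff d)) = C (A.coeff d) from by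
    rw [Phi, aeval_C, MvPolynomial.algebraMap_eq]]
  rw [coeff_C_mul, ← pairing_monomial]
  ring

end HallAux
namespace HallAux

open Finset MvPolynomial

section Newton

variable {R : Type*} [CommRing R] [Algebra ℚ R]

/-- Newton-type recursion characterizing complete homogeneous functions in terms
of power sums `q m = p_{m+1}`. -/
def NewtonRec (h q : ℕ → R) : Prop :=
  h 0 = 1 ∧ ∀ n : ℕ, ((n : ℚ) + 1) • h (n + 1) =
    ∑ m ∈ Finset.range (n + 1), q m * h (n - m)

lemma newtonRec_unique {h h' q : ℕ → R} (H : NewtonRec h q) (H' : NewtonRec h' q) :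
    ∀ n, h n = h' n := by
  intro n
  induction n using Nat.strong_induction_on with
  | _ n IH =>
    cases n with
    | zero => rw [H.1, H'.1]
    | succ m =>
      have h1 := H.2 m
      have h2 := H'.2 m
      have hsum : ∑ i ∈ Finset.range (m + 1), q i * h (m - i) =
          ∑ i ∈ Finset.range (m + 1), q i * h' (m - i) :=
        Finset.sum_congr rfl fun i _ => by rw [IH (m - i) (by omega)]
      rw [hsum, ← h2] at h1
      have hne : ((m : ℚ) + 1) ≠ 0 := by positivity
      calc h (m + 1) = ((m : ℚ) + 1)⁻¹ • (((m : ℚ) + 1) • h (m + 1)) := by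
            rw [smul_smul, inv_mul_cancel₀ hne, one_smul]
        _ = ((m : ℚ) + 1)⁻¹ • (((m : ℚ) + 1) • h' (m + 1)) := by rw [h1]
        _ = h' (m + 1) := by rw [smul_smul, inv_mul_cancel₀ hne, one_smul]

lemma newtonRec_geom (y : R) :
    NewtonRec (fun n => y ^ n) (fun m => y ^ (m + 1)) := by
  constructor
  · exact pow_zero y
  · intro n
    have hterm : ∀ m ∈ Finset.range (n + 1), y ^ (m + 1) * y ^ (n - m) = y ^ (n + 1) := by
      intro m hm
      rw [← pow_add]
      congr 1
      have := Finset.mem_range.mp hm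
      omega
    rw [Finset.sum_congr rfl hterm, Finset.sum_const, Finset.card_range,
      ← Nat.cast_smul_eq_nsmul ℚ]
    congr 1
    push_cast
    ring

lemma triangle_sum (q A B : ℕ → R) (n : ℕ) :
    ∑ r ∈ Finset.range (n + 1), (∑ m ∈ Finset.range (r + 1), q m * A (r - m)) * B (n - r)
      = ∑ m ∈ Finset.range (n + 1), q m * ∑ p ∈ Finset.HasAntidiagonal.antidiagonal (n - m), A p.1 * B p.2 := by
  have hrhs : ∀ m ∈ Finset.range (n + 1),
      q m * ∑ p ∈ Finset.HasAntidiagonal.antidiagonal (n - m), A p.1 * B p.2 =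
      ∑ k ∈ Finset.range (n - m + 1), q m * (A k * B (n - m - k)) := by
    intro m _
    rw [Finset.Nat.sum_antidiagonal_eq_sum_range_succ_mk, Finset.mul_sum]
  rw [Finset.sum_congr rfl hrhs]
  have hlhs : ∀ r ∈ Finset.range (n + 1),
      (∑ m ∈ Finset.range (r + 1), q m * A (r - m)) * B (n - r) =
      ∑ m ∈ Finset.range (r + 1), q m * A (r - m) * B (n - r) := by
    intro r _
    rw [Finset.sum_mul]
  rw [Finset.sum_congr rfl hlhs]
  rw [Finset.sum_sigma' (Finset.range (n + 1)) (fun r => Finset.range (r + 1))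
    (fun r m => q m * A (r - m) * B (n - r))]
  rw [Finset.sum_sigma' (Finset.range (n + 1)) (fun m => Finset.range (n - m + 1))
    (fun m k => q m * (A k * B (n - m - k)))]
  refine Finset.sum_bij'
    (i := fun (x : Σ _ : ℕ, ℕ) _ => (⟨x.2, x.1 - x.2⟩ : Σ _ : ℕ, ℕ))
    (j := fun (x : Σ _ : ℕ, ℕ) _ => (⟨x.1 + x.2, x.1⟩ : Σ _ : ℕ, ℕ))
    ?_ ?_ ?_ ?_ ?_
  · rintro ⟨r, m⟩ hx
    simp only [Finset.mem_sigma, Finset.mem_range] at hx ⊢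
    omega
  · rintro ⟨m, k⟩ hx
    simp only [Finset.mem_sigma, Finset.mem_range] at hx ⊢
    omega
  · rintro ⟨r, m⟩ hx
    simp only [Finset.mem_sigma, Finset.mem_range] at hx
    dsimp only
    have h1 : m + (r - m) = r := by omega
    rw [h1]
  · rintro ⟨m, k⟩ hx
    simp only [Finset.mem_sigma, Finset.mem_range] at hx
    dsimp only
    rw [Nat.add_sub_cancel_left]
  · rintro ⟨r, m⟩ hx
    simp only [Finset.mem_sigma, Finset.mem_range] at hx
    dsimp only
    have h1 : n - m - (r - m) = n - r := by omega
    rw [h1]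
    ring

lemma conv_half {h1 q1 : ℕ → R} (H1 : NewtonRec h1 q1) (B : ℕ → R) (n : ℕ) :
    ∑ r ∈ Finset.range (n + 2), (((r : ℕ) : ℚ) • h1 r) * B (n + 1 - r) =
      ∑ m ∈ Finset.range (n + 1), q1 m *
        ∑ p ∈ Finset.HasAntidiagonal.antidiagonal (n - m), h1 p.1 * B p.2 := by
  rw [Finset.sum_range_succ']
  simp only [Nat.cast_zero, zero_smul, zero_mul, add_zero]
  have hstep : ∀ i ∈ Finset.range (n + 1),
      ((((i + 1 : ℕ)) : ℚ) • h1 (i + 1)) * B (n + 1 - (i + 1)) =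
      (∑ m ∈ Finset.range (i + 1), q1 m * h1 (i - m)) * B (n - i) := by
    intro i _
    have hc : (((i + 1 : ℕ)) : ℚ) = (i : ℚ) + 1 := by push_cast; ring
    rw [hc, H1.2 i, show n + 1 - (i + 1) = n - i from by omega]
  rw [Finset.sum_congr rfl hstep]
  exact triangle_sum q1 h1 B n

lemma newtonRec_conv {h1 h2 q1 q2 : ℕ → R}
    (H1 : NewtonRec h1 q1) (H2 : NewtonRec h2 q2) :
    NewtonRec (fun n => ∑ p ∈ Finset.HasAntidiagonal.antidiagonal n, h1 p.1 * h2 p.2)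
      (fun m => q1 m + q2 m) := by
  constructor
  · show ∑ p ∈ Finset.HasAntidiagonal.antidiagonal (0:ℕ), h1 p.1 * h2 p.2 = 1
    rw [show Finset.HasAntidiagonal.antidiagonal (0:ℕ) = {((0:ℕ), (0:ℕ))} from rfl, Finset.sum_singleton,
      H1.1, H2.1, one_mul]
  · intro n
    show ((n : ℚ) + 1) • ∑ p ∈ Finset.HasAntidiagonal.antidiagonal (n+1), h1 p.1 * h2 p.2 =
      ∑ m ∈ Finset.range (n + 1), (q1 m + q2 m) * ∑ p ∈ Finset.HasAntidiagonal.antidiagonal (n - m), h1 p.1 * h2 p.2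
    rw [Finset.Nat.sum_antidiagonal_eq_sum_range_succ_mk, Finset.smul_sum]
    have hsplit : ∀ r ∈ Finset.range (n + 2),
        ((n : ℚ) + 1) • (h1 r * h2 (n + 1 - r)) =
        (((r : ℕ) : ℚ) • h1 r) * h2 (n + 1 - r) +
          (((n + 1 - r : ℕ) : ℚ) • h2 (n + 1 - r)) * h1 r := by
      intro r hr
      have hr' : r < n + 2 := Finset.mem_range.mp hr
      have hc : ((n : ℚ) + 1) = (r : ℚ) + ((n + 1 - r : ℕ) : ℚ) := by
        have h : ((n + 1 - r : ℕ) : ℚ) = ((n : ℚ) + 1) - (r : ℚ) := by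
          rw [Nat.cast_sub (by omega : r ≤ n + 1)]
          push_cast
          ring
        rw [h]; ring
      rw [hc, add_smul]
      simp only [smul_mul_assoc]
      rw [mul_comm (h2 (n + 1 - r)) (h1 r)]
    rw [Finset.sum_congr rfl hsplit, Finset.sum_add_distrib]
    have hS1 := conv_half H1 h2 n
    have hS2' : ∑ r ∈ Finset.range (n + 2),
        (((n + 1 - r : ℕ) : ℚ) • h2 (n + 1 - r)) * h1 r =
        ∑ s ∈ Finset.range (n + 2), (((s : ℕ) : ℚ) • h2 s) * h1 (n + 1 - s) := by
      rw [← Finset.sum_range_reflect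
        (fun s => (((s : ℕ) : ℚ) • h2 s) * h1 (n + 1 - s)) (n + 2)]
      refine Finset.sum_congr rfl fun r hr => ?_
      have hr' : r < n + 2 := Finset.mem_range.mp hr
      rw [show n + 2 - 1 - r = n + 1 - r from by omega,
        show n + 1 - (n + 1 - r) = r from by omega]
    have hS2 := conv_half H2 h1 n
    rw [hS1, hS2', hS2]
    have hswap : ∀ m ∈ Finset.range (n + 1),
        q2 m * ∑ p ∈ Finset.HasAntidiagonal.antidiagonal (n - m), h2 p.1 * h1 p.2 =
        q2 m * ∑ p ∈ Finset.HasAntidiagonal.antidiagonal (n - m), h1 p.1 * h2 p.2 := by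
      intro m _
      congr 1
      rw [← Finset.Nat.sum_antidiagonal_swap (f := fun p => h1 p.1 * h2 p.2)]
      refine Finset.sum_congr rfl fun p _ => ?_
      rw [Prod.fst_swap, Prod.snd_swap, mul_comm]
    rw [Finset.sum_congr rfl hswap, ← Finset.sum_add_distrib]
    refine Finset.sum_congr rfl fun m _ => ?_
    ring

end Newton

end HallAux
namespace HallAux

open Finset MvPolynomial

noncomputable def h2p (x y : MvPolynomial (Fin 2) ℚ) (r : ℕ) : MvPolynomial (Fin 2) ℚ :=
  ∑ p ∈ Finset.HasAntidiagonal.antidiagonal r, x ^ p.1 * y ^ p.2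

noncomputable def h4 (n : ℕ) : MvPolynomial (Fin 2) ℚ :=
  ∑ p ∈ Finset.HasAntidiagonal.antidiagonal n,
    h2p (X 0 ^ 2) (X 0 * X 1) p.1 * h2p (X 0 * X 1) (X 1 ^ 2) p.2

lemma newton_h2p (x y : MvPolynomial (Fin 2) ℚ) :
    NewtonRec (h2p x y) (fun m => x ^ (m + 1) + y ^ (m + 1)) :=
  newtonRec_conv (newtonRec_geom x) (newtonRec_geom y)

lemma newton_h4 : NewtonRec h4
    (fun m => ((X 0 ^ 2) ^ (m+1) + (X 0 * X 1) ^ (m+1)) +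
      ((X 0 * X 1) ^ (m+1) + (X 1 ^ 2) ^ (m+1)) : ℕ → MvPolynomial (Fin 2) ℚ) :=
  newtonRec_conv (newton_h2p _ _) (newton_h2p _ _)

lemma newton_aeval (F : MvPolynomial ℕ ℚ →ₐ[ℚ] MvPolynomial (Fin 2) ℚ) :
    NewtonRec (fun n => F (hInP n)) (fun m => F (X m)) := by
  constructor
  · show F (hInP 0) = 1
    rw [hInP, map_one]
  · intro n
    show ((n : ℚ) + 1) • F (hInP (n + 1)) = _
    rw [hInP, map_smul, smul_smul, mul_inv_cancel₀ (by positivity : ((n:ℚ)+1) ≠ 0), one_smul,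
      map_sum]
    exact Finset.sum_congr rfl fun m _ => by rw [map_mul]

lemma PhiA_eq_h4 (n : ℕ) :
    Phi (aeval (fun i => X i * X i) (hInP n)) = h4 n := by
  set G : MvPolynomial ℕ ℚ →ₐ[ℚ] MvPolynomial (Fin 2) ℚ :=
    Phi.comp (aeval (fun i => X i * X i)) with hG
  have h1 : Phi (aeval (fun i => X i * X i) (hInP n)) = G (hInP n) := rfl
  have hN := newton_aeval G
  have hq : (fun m => G (X m)) =
      (fun m => ((X 0 ^ 2) ^ (m+1) + (X 0 * X 1) ^ (m+1)) +
        ((X 0 * X 1) ^ (m+1) + (X 1 ^ 2) ^ (m+1)) : ℕ → MvPolynomial (Fin 2) ℚ) := by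
    funext m
    have : G (X m) = (X 0 ^ (m+1) + X 1 ^ (m+1)) * (X 0 ^ (m+1) + X 1 ^ (m+1)) := by
      rw [hG, AlgHom.comp_apply, aeval_X]
      rw [map_mul, Phi, aeval_X]
    rw [this]
    ring
  rw [hq] at hN
  rw [h1]
  exact newtonRec_unique hN newton_h4 n

end HallAux
namespace HallAux

open Finset MvPolynomial

lemma term_monomial (i j k l : ℕ) :
    ((X 0 : MvPolynomial (Fin 2) ℚ) ^ 2) ^ i * (X 0 * X 1) ^ j *
      ((X 0 * X 1) ^ k * (X 1 ^ 2) ^ l) =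
    monomial (E2 (2 * i + j + k) (j + k + 2 * l)) 1 := by
  have h : ((X 0 : MvPolynomial (Fin 2) ℚ) ^ 2) ^ i * (X 0 * X 1) ^ j *
      ((X 0 * X 1) ^ k * (X 1 ^ 2) ^ l) =
      X 0 ^ (2 * i + j + k) * X 1 ^ (j + k + 2 * l) := by ring
  rw [h, X_pow_eq_monomial, X_pow_eq_monomial, monomial_mul, one_mul]
  rfl

lemma count_eval (n c : ℕ) (hc1 : n ≤ c) (hc2 : c ≤ 2 * n) :
    ∑ r ∈ Finset.range (n+1), ∑ i ∈ Finset.range (r+1), ∑ k ∈ Finset.range (n-r+1),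
        (if i + r + k = c then (1:ℚ) else 0)
      = ∑ t ∈ Finset.range (2*n - c + 1), (if t % 2 = c % 2 then ((t:ℚ) + 1) else 0) := by
  classical
  -- LHS as a sum over a sigma set
  have hL1 : ∀ r ∈ Finset.range (n+1),
      ∑ i ∈ Finset.range (r+1), ∑ k ∈ Finset.range (n-r+1),
        (if i + r + k = c then (1:ℚ) else 0) =
      ∑ q ∈ Finset.range (r+1) ×ˢ Finset.range (n-r+1),
        (if q.1 + r + q.2 = c then (1:ℚ) else 0) := by
    intro r _
    rw [Finset.sum_product]
  rw [Finset.sum_congr rfl hL1]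
  rw [Finset.sum_sigma' (Finset.range (n+1))
    (fun r => Finset.range (r+1) ×ˢ Finset.range (n-r+1))
    (fun r q => if q.1 + r + q.2 = c then (1:ℚ) else 0)]
  -- RHS as a sum over a sigma set
  have hR1 : ∀ t ∈ Finset.range (2*n - c + 1),
      (if t % 2 = c % 2 then ((t:ℚ) + 1) else 0) =
      ∑ j ∈ Finset.range (t+1), (if t % 2 = c % 2 then (1:ℚ) else 0) := by
    intro t _
    by_cases h : t % 2 = c % 2
    · rw [if_pos h, Finset.sum_congr rfl (fun j _ => if_pos h), Finset.sum_const,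
        Finset.card_range, nsmul_eq_mul, mul_one]
      push_cast
      ring
    · rw [if_neg h, Finset.sum_congr rfl (fun j _ => if_neg h), Finset.sum_const,
        Finset.card_range, smul_zero]
  rw [Finset.sum_congr rfl hR1]
  rw [Finset.sum_sigma' (Finset.range (2*n - c + 1)) (fun t => Finset.range (t+1))
    (fun t _ => if t % 2 = c % 2 then (1:ℚ) else 0)]
  rw [Finset.sum_boole, Finset.sum_boole]
  congr 1
  refine Finset.card_bij'
    (i := fun (x : Σ _ : ℕ, ℕ × ℕ) _ =>
      (⟨x.1 - x.2.1 + x.2.2, x.1 - x.2.1⟩ : Σ _ : ℕ, ℕ))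
    (j := fun (y : Σ _ : ℕ, ℕ) _ =>
      (⟨(c - y.1) / 2 + y.2, ((c - y.1) / 2, y.1 - y.2)⟩ : Σ _ : ℕ, ℕ × ℕ))
    ?_ ?_ ?_ ?_
  · rintro ⟨r, i, k⟩ hx
    simp only [Finset.mem_filter, Finset.mem_sigma, Finset.mem_product,
      Finset.mem_range] at hx ⊢
    omega
  · rintro ⟨t, j⟩ hy
    simp only [Finset.mem_filter, Finset.mem_sigma, Finset.mem_product,
      Finset.mem_range] at hy ⊢
    omega
  · rintro ⟨r, i, k⟩ hx
    simp only [Finset.mem_filter, Finset.mem_sigma, Finset.mem_product,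
      Finset.mem_range] at hx
    dsimp only
    simp only [Sigma.mk.inj_iff, heq_eq_eq, Prod.mk.injEq]
    omega
  · rintro ⟨t, j⟩ hy
    simp only [Finset.mem_filter, Finset.mem_sigma, Finset.mem_product,
      Finset.mem_range] at hy
    dsimp only
    simp only [Sigma.mk.inj_iff, heq_eq_eq]
    omega

lemma coeff_h4 (n c d : ℕ) (hcd : c + d = 2 * n) (hc : n ≤ c) :
    MvPolynomial.coeff (E2 c d) (h4 n) =
      ∑ t ∈ Finset.range (2*n - c + 1), (if t % 2 = c % 2 then ((t:ℚ) + 1) else 0) := by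
  classical
  rw [h4, MvPolynomial.coeff_sum]
  have hstep : ∀ p ∈ Finset.HasAntidiagonal.antidiagonal n,
      MvPolynomial.coeff (E2 c d)
        (h2p (X 0 ^ 2) (X 0 * X 1) p.1 * h2p (X 0 * X 1) (X 1 ^ 2) p.2) =
      ∑ pi ∈ Finset.HasAntidiagonal.antidiagonal p.1, ∑ pk ∈ Finset.HasAntidiagonal.antidiagonal p.2,
        (if 2 * pi.1 + pi.2 + pk.1 = c ∧ pi.2 + pk.1 + 2 * pk.2 = d then (1:ℚ) else 0) := by
    rintro ⟨r, s⟩ _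
    rw [h2p, h2p, Finset.sum_mul_sum, MvPolynomial.coeff_sum]
    refine Finset.sum_congr rfl fun pi _ => ?_
    rw [MvPolynomial.coeff_sum]
    refine Finset.sum_congr rfl fun pk _ => ?_
    rw [term_monomial, MvPolynomial.coeff_monomial]
    by_cases h : 2 * pi.1 + pi.2 + pk.1 = c ∧ pi.2 + pk.1 + 2 * pk.2 = d
    · rw [if_pos (E2_eq_iff.mpr ⟨h.1, h.2⟩), if_pos h]
    · rw [if_neg (fun he => h (E2_eq_iff.mp he)), if_neg h]
  rw [Finset.sum_congr rfl hstep]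
  rw [Finset.Nat.sum_antidiagonal_eq_sum_range_succ_mk]
  have hstep2 : ∀ r ∈ Finset.range (n + 1),
      ∑ pi ∈ Finset.HasAntidiagonal.antidiagonal r, ∑ pk ∈ Finset.HasAntidiagonal.antidiagonal (n - r),
        (if 2 * pi.1 + pi.2 + pk.1 = c ∧ pi.2 + pk.1 + 2 * pk.2 = d then (1:ℚ) else 0) =
      ∑ i ∈ Finset.range (r + 1), ∑ k ∈ Finset.range (n - r + 1),
        (if i + r + k = c then (1:ℚ) else 0) := by
    intro r hr
    rw [Finset.Nat.sum_antidiagonal_eq_sum_range_succ_mk]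
    refine Finset.sum_congr rfl fun i hi => ?_
    rw [Finset.Nat.sum_antidiagonal_eq_sum_range_succ_mk]
    refine Finset.sum_congr rfl fun k hk => ?_
    have hr' : r < n + 1 := Finset.mem_range.mp hr
    have hi' : i < r + 1 := Finset.mem_range.mp hi
    have hk' : k < n - r + 1 := Finset.mem_range.mp hk
    refine if_congr ?_ rfl rfl
    omega
  rw [Finset.sum_congr rfl hstep2]
  exact count_eval n c hc (by omega)
end HallAux
namespace HallAux

open Finset MvPolynomial

noncomputable def gsum (b : ℕ) : ℚ :=
  ∑ t ∈ Finset.range (b+1), (if t % 2 = b % 2 then ((t:ℚ) + 1) else 0)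

lemma gsum_zero : gsum 0 = 1 := by simp [gsum]

lemma gsum_one : gsum 1 = 2 := by
  rw [gsum, Finset.sum_range_succ, Finset.sum_range_one]
  norm_num

lemma gsum_step (b : ℕ) : gsum (b + 2) = gsum b + ((b:ℚ) + 3) := by
  rw [gsum, Finset.sum_range_succ, Finset.sum_range_succ]
  have h1 : (b+1) % 2 ≠ (b+2) % 2 := by omega
  rw [if_neg h1, if_pos rfl, add_zero]
  have h3 : ∀ t ∈ Finset.range (b+1),
      (if t % 2 = (b+2) % 2 then ((t:ℚ)+1) else 0) =
      (if t % 2 = b % 2 then ((t:ℚ)+1) else 0) := by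
    intro t _
    exact if_congr (by omega) rfl rfl
  rw [Finset.sum_congr rfl h3, ← gsum]
  push_cast
  ring

lemma gsum_diff : ∀ b : ℕ, gsum (b+1) - gsum b =
    if Even (b+1) then (((b+1:ℕ)):ℚ)/2 + 1 else ((((b+1:ℕ)):ℚ)+1)/2 := by
  intro b
  induction b with
  | zero =>
    rw [gsum_one, gsum_zero, if_neg (by simp [Nat.even_add_one] : ¬ Even (0+1))]
    norm_num
  | succ m IH =>
    have key : gsum (m+1+1) - gsum (m+1) = ((m:ℚ)+3) - (gsum (m+1) - gsum m) := by
      rw [show m+1+1 = m+2 from rfl, gsum_step]; ring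
    rw [key, IH]
    by_cases he : Even (m+1)
    · rw [if_pos he, if_neg (by rw [Nat.even_add_one]; exact fun h => h he)]
      push_cast
      ring
    · rw [if_neg he, if_pos (by rw [Nat.even_add_one]; exact he)]
      push_cast
      ring

end HallAux
/-- For `n ≥ 2` and `1 ≤ a ≤ n`, the Hall inner product
`⟨h_n[h_1 h_1], s_{(2n-a,a)}⟩` equals `a/2 + 1` if `a` is even and `(a+1)/2` if `a`
is odd. -/
theorem hall_hn_h1h1_two_rows (n a : ℕ) (hn : 2 ≤ n) (ha1 : 1 ≤ a) (ha2 : a ≤ n) :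
    hall (pleth (hh n) (hh 1 * hh 1)) (schur [2 * n - a, a]) =
      if Even a then (a : ℚ) / 2 + 1 else ((a : ℚ) + 1) / 2 := by
  classical
  have hA := HallAux.toP_pleth_A n
  have hB := HallAux.toP_schur_two (2*n - a) a (by omega) ha1
  rw [hall, hA, hB]
  set A : MvPolynomial ℕ ℚ :=
    MvPolynomial.aeval (fun i => MvPolynomial.X i * MvPolynomial.X i) (hInP n) with hAdef
  have h1 : ∀ d ∈ A.support,
      zQ d * A.coeff d *
        (hInP (2*n-a) * hInP a - hInP (2*n-a+1) * hInP (a-1)).coeff d =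
      zQ d * A.coeff d * (hInP (2*n-a) * hInP a).coeff d -
        zQ d * A.coeff d * (hInP (2*n-a+1) * hInP (a-1)).coeff d := by
    intro d _
    rw [MvPolynomial.coeff_sub]
    ring
  rw [Finset.sum_congr rfl h1, Finset.sum_sub_distrib]
  rw [HallAux.pairing_sum A (2*n-a) a, HallAux.pairing_sum A (2*n-a+1) (a-1)]
  rw [show HallAux.Phi A = HallAux.h4 n from HallAux.PhiA_eq_h4 n]
  have e1 : MvPolynomial.coeff (HallAux.E2 (2*n-a) a) (HallAux.h4 n) = HallAux.gsum a := by
    rw [HallAux.coeff_h4 n (2*n-a) a (by omega) (by omega), HallAux.gsum]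
    rw [show 2*n - (2*n-a) = a from by omega]
    exact Finset.sum_congr rfl fun t _ => if_congr (by omega) rfl rfl
  have e2 : MvPolynomial.coeff (HallAux.E2 (2*n-a+1) (a-1)) (HallAux.h4 n) =
      HallAux.gsum (a-1) := by
    rw [HallAux.coeff_h4 n (2*n-a+1) (a-1) (by omega) (by omega), HallAux.gsum]
    rw [show 2*n - (2*n-a+1) = a - 1 from by omega]
    exact Finset.sum_congr rfl fun t _ => if_congr (by omega) rfl rfl
  rw [e1, e2]
  obtain ⟨b, rfl⟩ : ∃ b, a = b + 1 := ⟨a - 1, by omega⟩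
  rw [show b + 1 - 1 = b from rfl]
  exact HallAux.gsum_diff b
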